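/- For a single source with k shared key bits and Y uniform on an m-element real alphabet, there exists a block-length-one encoding such that var(Y) − MMSE_Eve ≤ var(Y)/2^k, i.e., the eavesdropper's achievable distortion is at least (1 − 2^{−k})·var(Y), while the legitimate receiver (knowing the key) decodes Y exactly. -/

import Mathlib

/-- Expectation of `f` under mass function `p` on a finite sample space. -/
noncomputable def pexp {Ω : Type*} [Fintype Ω] (p : Ω → ℝ) (f : Ω → ℝ) : ℝ :=
  ∑ ω, p ω * f ω

/-- Variance of `f` under mass function `p`. -/
noncomputable def pvar {Ω : Type*} [Fintype Ω] (p : Ω → ℝ) (f : Ω → ℝ) : ℝ :=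
  pexp p (fun ω => (f ω - pexp p f) ^ 2)

/-- Minimum mean-squared error of estimating `Y` from the observation `τ`:
the infimum over all estimators `h` of `E[(Y - h(τ))²]`. -/
noncomputable def pmmse {Ω T : Type*} [Fintype Ω] (p : Ω → ℝ) (Y : Ω → ℝ) (τ : Ω → T) : ℝ :=
  sInf {e : ℝ | ∃ h : T → ℝ, e = pexp p (fun ω => (Y ω - h (τ ω)) ^ 2)}

/-- Conditional expectation `E[Y | τ = t]` (with the junk value `0` on null events). -/
noncomputable def pcond {Ω T : Type*} [Fintype Ω] [DecidableEq T]
    (p : Ω → ℝ) (Y : Ω → ℝ) (τ : Ω → T) (t : T) : ℝ :=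
  (∑ ω ∈ Finset.univ.filter (fun ω => τ ω = t), p ω * Y ω) /
    (∑ ω ∈ Finset.univ.filter (fun ω => τ ω = t), p ω)

lemma sum_cons_expand {α : Type*} [Fintype α] (n : ℕ) (F : (Fin (n+1) → α) → ℝ) :
    ∑ s : Fin (n+1) → α, F s = ∑ g : α, ∑ t : Fin n → α, F (Fin.cons g t) := by
  rw [← (Fin.consEquiv (fun _ : Fin (n+1) => α)).sum_comp]
  simp [Fintype.sum_prod_type, Fin.consEquiv]

lemma cons_sum {α : Type*} [Fintype α] {n : ℕ} (x : α → ℝ) (g : α) (t : Fin n → α) :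
    (∑ i, x ((Fin.cons g t : Fin (n+1) → α) i)) = x g + ∑ i, x (t i) := by
  rw [Fin.sum_univ_succ]; simp

lemma sum_fun_lin {α : Type*} [Fintype α] (x : α → ℝ) (hx : ∑ a, x a = 0) :
    ∀ n : ℕ, ∑ s : Fin n → α, (∑ i, x (s i)) = 0 := by
  intro n
  induction n with
  | zero => simp
  | succ n ih =>
    rw [sum_cons_expand]
    have : ∀ g : α, ∑ t : Fin n → α, (x g + ∑ i, x (t i))
        = (Fintype.card (Fin n → α) : ℝ) * x g := by
      intro g
      rw [Finset.sum_add_distrib, ih, Finset.sum_const, add_zero, Finset.card_univ,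
        nsmul_eq_mul]
    simp only [cons_sum, this, ← Finset.mul_sum, hx, mul_zero]

lemma sum_fun_sq {α : Type*} [Fintype α] (x : α → ℝ) (hx : ∑ a, x a = 0) :
    ∀ n : ℕ, (Fintype.card α : ℝ) * ∑ s : Fin n → α, (∑ i, x (s i))^2
      = n * (Fintype.card α : ℝ)^n * ∑ a, (x a)^2 := by
  intro n
  induction n with
  | zero => simp
  | succ n ih =>
    rw [sum_cons_expand]
    have h2 : ∀ g : α, ∑ t : Fin n → α, (x g + ∑ i, x (t i))^2
        = (Fintype.card α : ℝ)^n * (x g)^2 + ∑ t : Fin n → α, (∑ i, x (t i))^2 := by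
      intro g
      have expand : ∀ t : Fin n → α, (x g + ∑ i, x (t i))^2
          = (x g)^2 + (2 * x g) * (∑ i, x (t i)) + (∑ i, x (t i))^2 := by
        intro t; ring
      simp only [expand, Finset.sum_add_distrib, Finset.sum_const, Finset.card_univ,
        nsmul_eq_mul, ← Finset.mul_sum, sum_fun_lin x hx n, mul_zero, add_zero,
        Fintype.card_fun, Fintype.card_fin]
      push_cast
      ring
    simp only [cons_sum, h2, Finset.sum_add_distrib, Finset.sum_const, Finset.card_univ,
      nsmul_eq_mul, ← Finset.mul_sum]
    rw [mul_add, ih]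
    push_cast
    ring

lemma exists_good_shifts {α : Type*} [Fintype α] [Nonempty α] (n : ℕ) (Q : ℝ)
    (z : α → α → ℝ) (h0 : ∀ t, ∑ c, z t c = 0) (hQ : ∀ t, ∑ c, (z t c)^2 = Q) :
    ∃ s : Fin n → α, ∑ t, (∑ i, z t (s i))^2 ≤ n * Q := by
  have hcard : (0:ℝ) < (Fintype.card α : ℝ) := by
    exact_mod_cast Fintype.card_pos
  have key : ∑ s : Fin n → α, ∑ t, (∑ i, z t (s i))^2
      = ∑ s : Fin n → α, (n : ℝ) * Q := by
    apply mul_left_cancel₀ hcard.ne'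
    calc (Fintype.card α : ℝ) * ∑ s : Fin n → α, ∑ t, (∑ i, z t (s i))^2
        = ∑ t, ∑ s : Fin n → α, (Fintype.card α : ℝ) * (∑ i, z t (s i))^2 := by
          rw [Finset.mul_sum]; simp_rw [Finset.mul_sum]; rw [Finset.sum_comm]
      _ = ∑ t : α, ((n : ℝ) * (Fintype.card α : ℝ)^n * ∑ c, (z t c)^2) := by
          refine Finset.sum_congr rfl fun t _ => ?_
          rw [← Finset.mul_sum, sum_fun_sq (z t) (h0 t) n]
      _ = (Fintype.card α : ℝ) * ∑ s : Fin n → α, (n : ℝ) * Q := by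
          simp only [hQ, Finset.sum_const, Finset.card_univ, nsmul_eq_mul, Fintype.card_fun,
            Fintype.card_fin]
          push_cast
          ring
  have hne : (Finset.univ : Finset (Fin n → α)).Nonempty := Finset.univ_nonempty
  obtain ⟨s, _, hs⟩ := Finset.exists_le_of_sum_le hne key.le
  exact ⟨s, hs⟩

lemma quad_bound (N : ℕ) (u : Fin N → ℝ) (b : ℝ) :
    (N:ℝ) * ∑ i, (u i)^2 - (∑ i, u i)^2 ≤ (N:ℝ) * ∑ i, (u i - b)^2 := by
  have hexp : ∑ i, (u i - b)^2
      = ∑ i, (u i)^2 - 2*b*(∑ i, u i) + (N:ℝ)*b^2 := by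
    have : ∀ i, (u i - b)^2 = (u i)^2 - 2*b*(u i) + b^2 := fun i => by ring
    simp only [this, Finset.sum_add_distrib, Finset.sum_sub_distrib, Finset.sum_const,
      Finset.card_univ, Fintype.card_fin, nsmul_eq_mul, ← Finset.mul_sum]
  nlinarith [sq_nonneg ((N:ℝ)*b - ∑ i, u i)]

theorem stmt9 (m k : ℕ) (hm : 0 < m) (y : Fin m → ℝ) :
    ∃ e : Fin m → Fin (2 ^ k) → Fin m,
      (∀ i : Fin (2 ^ k), Function.Injective (fun a => e a i)) ∧
      pvar (fun _ : Fin m × Fin (2 ^ k) => 1 / (m * 2 ^ k)) (fun ω => y ω.1) -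
          pmmse (fun _ : Fin m × Fin (2 ^ k) => 1 / (m * 2 ^ k)) (fun ω => y ω.1)
            (fun ω => e ω.1 ω.2) ≤
        pvar (fun _ : Fin m × Fin (2 ^ k) => 1 / (m * 2 ^ k)) (fun ω => y ω.1) / 2 ^ k := by
  obtain ⟨m', rfl⟩ := Nat.exists_eq_succ_of_ne_zero hm.ne'
  set M : ℕ := m' + 1 with hMdef
  set N : ℕ := 2 ^ k with hNdef
  have hM0 : (0:ℝ) < (M:ℝ) := by positivity
  have hN0 : (0:ℝ) < (N:ℝ) := by rw [hNdef]; positivity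
  have hcast : ((2:ℝ)) ^ k = (N:ℝ) := by rw [hNdef]; push_cast; ring
  set μ : ℝ := (∑ a, y a) / M with hμdef
  set x : Fin M → ℝ := fun a => y a - μ with hxdef
  have hx : ∑ a, x a = 0 := by
    rw [hxdef]
    rw [Finset.sum_sub_distrib, Finset.sum_const, Finset.card_univ, Fintype.card_fin,
      nsmul_eq_mul, hμdef]
    field_simp
    exact sub_eq_zero.mpr rfl
  set Q : ℝ := ∑ a, (x a)^2 with hQdef
  have hQnn : 0 ≤ Q := Finset.sum_nonneg fun a _ => sq_nonneg _
  obtain ⟨s, hs⟩ := exists_good_shifts (α := Fin M) N Q (fun t c => x (t - c))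
    (fun t =>
      (Fintype.sum_equiv (Equiv.subLeft t) (fun c => x (t - c)) x (fun c => rfl)).trans hx)
    (fun t => by
      rw [hQdef]
      exact Fintype.sum_equiv (Equiv.subLeft t) (fun c => (x (t - c))^2)
        (fun a => (x a)^2) (fun c => rfl))
  refine ⟨fun a i => a + s i, fun i => add_left_injective (s i), ?_⟩
  set p : Fin M × Fin N → ℝ := fun _ => 1 / (M * 2 ^ k) with hpdef
  have hpexp : ∀ g : Fin M × Fin N → ℝ, pexp p g = (∑ ω, g ω) / ((M:ℝ) * N) := by
    intro g
    unfold pexp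
    rw [hpdef, hcast]
    simp only [one_div]
    rw [div_eq_mul_inv, Finset.sum_mul]
    refine Finset.sum_congr rfl fun ω _ => mul_comm _ _
  have hsum_prod : ∀ g : Fin M → ℝ, (∑ ω : Fin M × Fin N, g ω.1) = N * ∑ a, g a := by
    intro g
    rw [Fintype.sum_prod_type]
    simp only [Finset.sum_const, Finset.card_univ, Fintype.card_fin, nsmul_eq_mul]
    rw [Finset.mul_sum]
  have hEY : pexp p (fun ω : Fin M × Fin N => y ω.1) = μ := by
    rw [hpexp, hsum_prod, hμdef]
    field_simp
    ring
  have hV : pvar p (fun ω : Fin M × Fin N => y ω.1) = Q / M := by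
    unfold pvar
    rw [hEY]
    have hfun : (fun ω : Fin M × Fin N => (y ω.1 - μ)^2) = fun ω => (x ω.1)^2 := by
      funext ω; rw [hxdef]
    rw [hfun, hpexp]
    rw [show (∑ ω : Fin M × Fin N, (x ω.1)^2) = (N:ℝ) * Q from hsum_prod (fun a => (x a)^2)]
    rw [div_eq_div_iff (by positivity) hM0.ne']
    ring
  have hbound : ∀ h : Fin M → ℝ,
      Q / M - Q / (M * N) ≤ pexp p (fun ω : Fin M × Fin N =>
        (y ω.1 - h (ω.1 + s ω.2))^2) := by
    intro h
    rw [hpexp]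
    set E : ℝ := ∑ ω : Fin M × Fin N, (y ω.1 - h (ω.1 + s ω.2))^2 with hEdef
    have h1 : E = ∑ i : Fin N, ∑ t : Fin M, (y (t - s i) - h t)^2 := by
      rw [hEdef, Fintype.sum_prod_type, Finset.sum_comm]
      refine Finset.sum_congr rfl fun i _ => ?_
      exact Fintype.sum_equiv (Equiv.addRight (s i)) _ _ (fun a => by simp)
    have hregroup : E = ∑ t : Fin M, ∑ i : Fin N, (y (t - s i) - h t)^2 :=
      h1.trans Finset.sum_comm
    have hstep : ∑ t : Fin M, ((N:ℝ) * ∑ i, (y (t - s i))^2 - (∑ i, y (t - s i))^2)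
        ≤ (N:ℝ) * E := by
      rw [hregroup, Finset.mul_sum]
      exact Finset.sum_le_sum fun t _ => quad_bound N _ (h t)
    have hA1 : ∑ t : Fin M, ∑ i : Fin N, (y (t - s i))^2 = (N:ℝ) * ∑ a, (y a)^2 := by
      rw [Finset.sum_comm]
      have heach : ∀ i : Fin N, ∑ t : Fin M, (y (t - s i))^2 = ∑ a, (y a)^2 := fun i =>
        Fintype.sum_equiv (Equiv.subRight (s i)) (fun t => (y (t - s i))^2)
          (fun a => (y a)^2) (fun t => rfl)
      simp only [heach, Finset.sum_const, Finset.card_univ, Fintype.card_fin, nsmul_eq_mul]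
    have hA4 : ∑ a, (y a)^2 = Q + M * μ^2 := by
      have expand : ∀ a : Fin M, (y a)^2 = (x a)^2 + 2*μ*(x a) + μ^2 := by
        intro a; simp only [hxdef]; ring
      simp only [expand, Finset.sum_add_distrib, Finset.sum_const, Finset.card_univ,
        Fintype.card_fin, nsmul_eq_mul, ← Finset.mul_sum, hx, mul_zero, ← hQdef]
      have hx' : ∑ i : Fin m'.succ, x i = 0 := hx
      have hQ' : ∑ i : Fin m'.succ, x i ^ 2 = Q := rfl
      have hM' : ((m'.succ : ℕ) : ℝ) = (M:ℝ) := rfl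
      linear_combination (2*μ) * hx' + hQ' + μ^2 * hM'
    have hW0 : ∑ t : Fin M, ∑ i : Fin N, x (t - s i) = 0 := by
      rw [Finset.sum_comm]
      refine Finset.sum_eq_zero fun i _ => ?_
      exact (Fintype.sum_equiv (Equiv.subRight (s i)) (fun t => x (t - s i)) x
        (fun t => rfl)).trans hx
    have hU : ∀ t : Fin M, ∑ i : Fin N, y (t - s i)
        = (∑ i : Fin N, x (t - s i)) + (N:ℝ)*μ := by
      intro t
      have expand : ∀ i : Fin N, y (t - s i) = x (t - s i) + μ := by
        intro i; simp [hxdef]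
      simp only [expand, Finset.sum_add_distrib, Finset.sum_const, Finset.card_univ,
        Fintype.card_fin, nsmul_eq_mul]
    have hA3 : ∑ t : Fin M, (∑ i : Fin N, y (t - s i))^2
        ≤ (N:ℝ)*Q + M*((N:ℝ)*μ)^2 := by
      calc ∑ t : Fin M, (∑ i : Fin N, y (t - s i))^2
          = ∑ t : Fin M, ((∑ i : Fin N, x (t - s i))^2
              + 2*((N:ℝ)*μ)*(∑ i : Fin N, x (t - s i)) + ((N:ℝ)*μ)^2) := by
            refine Finset.sum_congr rfl fun t _ => ?_
            rw [hU t]; ring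
        _ = (∑ t : Fin M, (∑ i : Fin N, x (t - s i))^2)
              + 2*((N:ℝ)*μ)*(∑ t : Fin M, ∑ i : Fin N, x (t - s i))
              + (M:ℝ)*((N:ℝ)*μ)^2 := by
            simp only [Finset.sum_add_distrib, Finset.sum_const, Finset.card_univ,
              Fintype.card_fin, nsmul_eq_mul, ← Finset.mul_sum]
        _ = (∑ t : Fin M, (∑ i : Fin N, x (t - s i))^2) + (M:ℝ)*((N:ℝ)*μ)^2 := by
            rw [hW0]; ring
        _ ≤ (N:ℝ)*Q + (M:ℝ)*((N:ℝ)*μ)^2 := by linarith [hs]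
    have hEge : ((N:ℝ) - 1) * Q ≤ E := by
      have hsplit : ∑ t : Fin M, ((N:ℝ) * ∑ i, (y (t - s i))^2 - (∑ i, y (t - s i))^2)
          = (N:ℝ) * (∑ t : Fin M, ∑ i : Fin N, (y (t - s i))^2)
            - ∑ t : Fin M, (∑ i : Fin N, y (t - s i))^2 := by
        rw [Finset.sum_sub_distrib, Finset.mul_sum]
      rw [hsplit, hA1, hA4] at hstep
      have h2 : (N:ℝ) * (((N:ℝ) - 1) * Q) ≤ (N:ℝ) * E := by nlinarith [hA3, hstep]
      exact le_of_mul_le_mul_left h2 hN0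
    have heq : Q / M - Q / (M*N) = ((N:ℝ) - 1) * Q / ((M:ℝ)*N) := by
      field_simp
    rw [heq]
    gcongr
  have hmmse_lb : Q / M - Q / (M*N)
      ≤ pmmse p (fun ω : Fin M × Fin N => y ω.1) (fun ω => ω.1 + s ω.2) := by
    unfold pmmse
    apply le_csInf
    · exact ⟨_, fun _ => (0:ℝ), rfl⟩
    · rintro r ⟨h, rfl⟩
      exact hbound h
  show pvar p (fun ω : Fin M × Fin N => y ω.1)
      - pmmse p (fun ω : Fin M × Fin N => y ω.1) (fun ω => ω.1 + s ω.2)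
      ≤ pvar p (fun ω : Fin M × Fin N => y ω.1) / 2 ^ k
  rw [hV]
  have h2k : Q / (M:ℝ) / 2 ^ k = Q / ((M:ℝ)*N) := by rw [hcast, div_div]
  rw [h2k]
  linarith [hmmse_lb]
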